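/- arXiv:2305.07169 — 2 statements merged into one kernel-verified Lean document; each statement's English description precedes it below -/
import Mathlib

section
/- Let ‖·‖ be a smooth unitarily invariant norm on M_n(ℂ). Let σ ∈ M_n(ℂ) be positive semidefinite with ‖σ‖ = 1, and let η be its norming functional (the unique B ∈ M_n(ℂ) with ‖B‖* = 1 and tr(Bσ) = 1). Then η is positive semidefinite, η commutes with σ (ησ = ση), the product ησ is positive semidefinite, and tr(ησ) = 1 (i.e. ησ is a state, in particular ‖ησ‖_1 = 1). -/
open scoped ComplexOrder Matrix

/-- The `r`-th power (`r` a real exponent) of a matrix, given by the functional calculus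
applied to the real power function.  For positive semidefinite matrices this is the usual
power from the functional calculus. -/
noncomputable def matPow {n : ℕ} (A : Matrix (Fin n) (Fin n) ℂ) (r : ℝ) :
    Matrix (Fin n) (Fin n) ℂ :=
  cfc (fun t : ℝ => t ^ r) A

/-- The absolute value `|A| = (AᴴA)^(1/2)` of a matrix. -/
noncomputable def matAbs {n : ℕ} (A : Matrix (Fin n) (Fin n) ℂ) :
    Matrix (Fin n) (Fin n) ℂ :=
  cfc (fun t : ℝ => Real.sqrt t) (Aᴴ * A)

/-- The trace norm `‖A‖₁ = tr |A|`. -/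
noncomputable def trNorm {n : ℕ} (A : Matrix (Fin n) (Fin n) ℂ) : ℝ :=
  ((matAbs A).trace).re

/-- The operator norm (largest singular value) of a matrix. -/
noncomputable def opNorm {n : ℕ} (A : Matrix (Fin n) (Fin n) ℂ) : ℝ :=
  ‖Matrix.toEuclideanCLM (𝕜 := ℂ) A‖

/-- `N` is a unitarily invariant norm on the `n × n` complex matrices: it is a norm
satisfying `N (U * A * V) = N A` for all unitaries `U`, `V`. -/
def IsUnitarilyInvariantNorm {n : ℕ} (N : Matrix (Fin n) (Fin n) ℂ → ℝ) : Prop :=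
  (∀ A B, N (A + B) ≤ N A + N B) ∧
  (∀ (c : ℂ) (A), N (c • A) = ‖c‖ * N A) ∧
  (∀ A, N A = 0 → A = 0) ∧
  (∀ (A U V : Matrix (Fin n) (Fin n) ℂ),
    U ∈ Matrix.unitaryGroup (Fin n) ℂ → V ∈ Matrix.unitaryGroup (Fin n) ℂ →
    N (U * A * V) = N A)

/-- The dual norm of `N` with respect to trace duality:
`‖B‖* = sup {|tr (B * A)| : N A ≤ 1}`. -/
noncomputable def dualNorm {n : ℕ} (N : Matrix (Fin n) (Fin n) ℂ → ℝ)
    (B : Matrix (Fin n) (Fin n) ℂ) : ℝ :=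
  sSup ((fun A => ‖(B * A).trace‖) '' {A | N A ≤ 1})

/-- `N` is smooth: every nonzero matrix admits a unique norming functional. -/
def IsSmoothNorm {n : ℕ} (N : Matrix (Fin n) (Fin n) ℂ → ℝ) : Prop :=
  ∀ A : Matrix (Fin n) (Fin n) ℂ, A ≠ 0 →
    ∃! B : Matrix (Fin n) (Fin n) ℂ, dualNorm N B = 1 ∧ (B * A).trace = (N A : ℂ)

/-- Type synonym for matrices, used to carry the norm `N` as instance data. -/
def MatWithNorm (n : ℕ) := Matrix (Fin n) (Fin n) ℂ

instance {n : ℕ} : AddCommGroup (MatWithNorm n) :=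
  inferInstanceAs (AddCommGroup (Matrix (Fin n) (Fin n) ℂ))

noncomputable instance {n : ℕ} : Module ℂ (MatWithNorm n) :=
  inferInstanceAs (Module ℂ (Matrix (Fin n) (Fin n) ℂ))

instance {n : ℕ} : FiniteDimensional ℂ (MatWithNorm n) :=
  inferInstanceAs (FiniteDimensional ℂ (Matrix (Fin n) (Fin n) ℂ))

/-- The identity, as a linear equivalence between the type synonym and matrices. -/
noncomputable def toMat {n : ℕ} : MatWithNorm n ≃ₗ[ℂ] Matrix (Fin n) (Fin n) ℂ :=
  LinearEquiv.refl ℂ (Matrix (Fin n) (Fin n) ℂ)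

lemma myBddAbove {n : ℕ} {N : Matrix (Fin n) (Fin n) ℂ → ℝ}
    (hN : IsUnitarilyInvariantNorm N) (B : Matrix (Fin n) (Fin n) ℂ) :
    BddAbove ((fun A => ‖(B * A).trace‖) '' {A | N A ≤ 1}) := by
  obtain ⟨hadd, hsmul, hdef, _⟩ := hN
  have h0 : N 0 = 0 := by simpa using hsmul 0 0
  have hneg : ∀ A, N (-A) = N A := fun A => by simpa using hsmul (-1) A
  letI : NormedAddCommGroup (MatWithNorm n) :=
    AddGroupNorm.toNormedAddCommGroup
      { toFun := fun A => N (toMat A)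
        map_zero' := by simpa using h0
        add_le' := fun a b => by simpa using hadd (toMat a) (toMat b)
        neg' := fun a => by simpa using hneg (toMat a)
        eq_zero_of_map_eq_zero' := fun a ha => toMat.injective (by simpa using hdef _ ha) }
  letI : NormedSpace ℂ (MatWithNorm n) :=
    { norm_smul_le := fun c A => by
        have : ‖c • A‖ = N (toMat (c • A)) := rfl
        rw [this, map_smul, hsmul]
        exact le_of_eq rfl }
  let f : MatWithNorm n →ₗ[ℂ] ℂ :=
    ((Matrix.traceLinearMap (Fin n) ℂ ℂ).comp (LinearMap.mulLeft ℂ B)).comp toMat.toLinearMap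
  obtain ⟨C, hCpos, hC⟩ :=
    SemilinearMapClass.bound_of_continuous f f.continuous_of_finiteDimensional
  refine ⟨C, ?_⟩
  rintro x ⟨A, hA, rfl⟩
  have h1 : ‖f (toMat.symm A)‖ ≤ C * ‖toMat.symm A‖ := hC _
  have h2 : ‖toMat.symm A‖ = N A := by
    show N (toMat (toMat.symm A)) = N A
    rw [toMat.apply_symm_apply]
  have h3 : f (toMat.symm A) = (B * A).trace := by
    show (B * toMat (toMat.symm A)).trace = (B * A).trace
    rw [toMat.apply_symm_apply]
  rw [h3, h2] at h1
  calc ‖(B * A).trace‖ = ‖(B * A).trace‖ := rfl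
    _ ≤ C * N A := h1
    _ ≤ C * 1 := mul_le_mul_of_nonneg_left hA (le_of_lt hCpos)
    _ = C := mul_one _

lemma le_dualNorm {n : ℕ} {N : Matrix (Fin n) (Fin n) ℂ → ℝ}
    (hN : IsUnitarilyInvariantNorm N) (B A : Matrix (Fin n) (Fin n) ℂ) (hA : N A ≤ 1) :
    ‖(B * A).trace‖ ≤ dualNorm N B :=
  le_csSup (myBddAbove hN B) ⟨A, hA, rfl⟩

lemma dualNorm_unitary {n : ℕ} {N : Matrix (Fin n) (Fin n) ℂ → ℝ}
    (hN : IsUnitarilyInvariantNorm N) (B W₁ W₂ : Matrix (Fin n) (Fin n) ℂ)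
    (h1 : W₁ ∈ Matrix.unitaryGroup (Fin n) ℂ) (h2 : W₂ ∈ Matrix.unitaryGroup (Fin n) ℂ) :
    dualNorm N (W₁ * B * W₂) = dualNorm N B := by
  have e2 : W₂ * star W₂ = 1 := Matrix.mem_unitaryGroup_iff.mp h2
  have e1 : star W₁ * W₁ = 1 := Matrix.mem_unitaryGroup_iff'.mp h1
  unfold dualNorm
  congr 1
  ext x
  constructor
  · rintro ⟨A, hA, rfl⟩
    refine ⟨W₂ * A * W₁, ?_, ?_⟩
    · show N (W₂ * A * W₁) ≤ 1
      rw [hN.2.2.2 A W₂ W₁ h2 h1]; exact hA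
    · show ‖(B * (W₂ * A * W₁)).trace‖ = ‖(W₁ * B * W₂ * A).trace‖
      congr 1
      calc (B * (W₂ * A * W₁)).trace = ((B * W₂ * A) * W₁).trace := by
            rw [show B * (W₂ * A * W₁) = (B * W₂ * A) * W₁ by noncomm_ring]
        _ = (W₁ * (B * W₂ * A)).trace := (Matrix.trace_mul_comm _ _)
        _ = (W₁ * B * W₂ * A).trace := by
            rw [show W₁ * (B * W₂ * A) = W₁ * B * W₂ * A by noncomm_ring]
  · rintro ⟨A, hA, rfl⟩
    refine ⟨star W₂ * A * star W₁, ?_, ?_⟩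
    · show N (star W₂ * A * star W₁) ≤ 1
      rw [hN.2.2.2 A (star W₂) (star W₁) (Unitary.star_mem h2) (Unitary.star_mem h1)]
      exact hA
    · show ‖(W₁ * B * W₂ * (star W₂ * A * star W₁)).trace‖
        = ‖(B * A).trace‖
      congr 1
      calc (W₁ * B * W₂ * (star W₂ * A * star W₁)).trace
          = (W₁ * (B * (W₂ * star W₂) * A * star W₁)).trace := by
            rw [show W₁ * B * W₂ * (star W₂ * A * star W₁)
              = W₁ * (B * (W₂ * star W₂) * A * star W₁) by noncomm_ring]
        _ = (W₁ * (B * A * star W₁)).trace := by rw [e2, mul_one]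
        _ = ((B * A * star W₁) * W₁).trace := (Matrix.trace_mul_comm _ _)
        _ = (B * A).trace := by
            rw [show B * A * star W₁ * W₁ = B * A * (star W₁ * W₁) by noncomm_ring, e1, mul_one]

theorem statement1 {n : ℕ} (N : Matrix (Fin n) (Fin n) ℂ → ℝ)
    (hN : IsUnitarilyInvariantNorm N) (hsm : IsSmoothNorm N)
    (σ : Matrix (Fin n) (Fin n) ℂ) (hσ : σ.PosSemidef) (hσ1 : N σ = 1)
    (η : Matrix (Fin n) (Fin n) ℂ)
    (hη : dualNorm N η = 1 ∧ (η * σ).trace = 1) :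
    η.PosSemidef ∧ η * σ = σ * η ∧ (η * σ).PosSemidef ∧ (η * σ).trace = 1 := by
  obtain ⟨hηd, hητ⟩ := hη
  -- σ ≠ 0 and the uniqueness principle
  have hσne : σ ≠ 0 := by
    intro h
    have h0 : N 0 = 0 := by simpa using hN.2.1 0 0
    rw [h, h0] at hσ1
    exact zero_ne_one hσ1
  obtain ⟨B₀, hB₀, huniq⟩ := hsm σ hσne
  have hNσC : ((N σ : ℝ) : ℂ) = 1 := by rw [hσ1]; norm_num
  have uniq : ∀ B, dualNorm N B = 1 → (B * σ).trace = 1 → B = η := by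
    intro B hB1 hB2
    have h₁ : B = B₀ := huniq B ⟨hB1, by rw [hNσC]; exact hB2⟩
    have h₂ : η = B₀ := huniq η ⟨hηd, by rw [hNσC]; exact hητ⟩
    rw [h₁, h₂]
  -- spectral decomposition of σ
  have hH := hσ.1
  set U : Matrix (Fin n) (Fin n) ℂ := (hH.eigenvectorUnitary : Matrix (Fin n) (Fin n) ℂ) with hU_def
  have hU : U ∈ Matrix.unitaryGroup (Fin n) ℂ := hH.eigenvectorUnitary.2
  have hUU : U * star U = 1 := Matrix.mem_unitaryGroup_iff.mp hU
  have hUU' : star U * U = 1 := Matrix.mem_unitaryGroup_iff'.mp hU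
  set d : Fin n → ℝ := hH.eigenvalues with hd_def
  have hd0 : ∀ i, 0 ≤ d i := hσ.eigenvalues_nonneg
  set D : Matrix (Fin n) (Fin n) ℂ := Matrix.diagonal (fun i => (d i : ℂ)) with hD_def
  have hspec : σ = U * D * star U := by
    have h := hH.spectral_theorem
    have : (RCLike.ofReal ∘ d : Fin n → ℂ) = fun i => (d i : ℂ) := rfl
    rw [this] at h
    exact h
  -- helpers
  have sandwich : ∀ X Y : Matrix (Fin n) (Fin n) ℂ,
      (U * X * star U) * (U * Y * star U) = U * (X * Y) * star U := by
    intro X Y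
    rw [show (U * X * star U) * (U * Y * star U) = U * (X * (star U * U) * Y) * star U by
      noncomm_ring, hUU', mul_one]
  have cancel : ∀ X Y : Matrix (Fin n) (Fin n) ℂ,
      U * X * star U = U * Y * star U → X = Y := by
    intro X Y h
    have key : ∀ Z : Matrix (Fin n) (Fin n) ℂ, star U * (U * Z * star U) * U = Z := by
      intro Z
      rw [show star U * (U * Z * star U) * U = (star U * U) * Z * (star U * U) by noncomm_ring,
        hUU', one_mul, mul_one]
    calc X = star U * (U * X * star U) * U := (key X).symm
      _ = star U * (U * Y * star U) * U := by rw [h]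
      _ = Y := key Y
  have trace_conj : ∀ X : Matrix (Fin n) (Fin n) ℂ, (U * X * star U).trace = X.trace := by
    intro X
    calc (U * X * star U).trace = (U * (X * star U)).trace := by rw [mul_assoc]
      _ = ((X * star U) * U).trace := Matrix.trace_mul_comm _ _
      _ = X.trace := by
          rw [show (X * star U) * U = X * (star U * U) by noncomm_ring, hUU', mul_one]
  -- the matrix M = Uᴴ η U
  set M : Matrix (Fin n) (Fin n) ℂ := star U * η * U with hM_def
  have hηUM : η = U * M * star U := by
    rw [hM_def, show U * (star U * η * U) * star U = (U * star U) * η * (U * star U) by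
      noncomm_ring, hUU, one_mul, mul_one]
  -- diagonal unitary membership helper
  have hdiagmem : ∀ v : Fin n → ℂ, (∀ k, v k * star (v k) = 1) →
      Matrix.diagonal v ∈ Matrix.unitaryGroup (Fin n) ℂ := by
    intro v hv
    rw [Matrix.mem_unitaryGroup_iff, Matrix.star_eq_conjTranspose,
      Matrix.diagonal_conjTranspose, Matrix.diagonal_mul_diagonal]
    have h1 : (fun i => v i * star v i) = fun _ => (1 : ℂ) := funext fun i => hv i
    rw [h1, Matrix.diagonal_one]
  -- conjugation by diagonal unitaries fixes η
  have conj_fix : ∀ v : Fin n → ℂ, (∀ k, v k * star (v k) = 1) →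
      Matrix.diagonal v * M = M * Matrix.diagonal v := by
    intro v hv
    set W : Matrix (Fin n) (Fin n) ℂ := U * Matrix.diagonal v * star U with hW_def
    have hWmem : W ∈ Matrix.unitaryGroup (Fin n) ℂ :=
      mul_mem (mul_mem hU (hdiagmem v hv)) (Unitary.star_mem hU)
    have hWσ : W * σ = σ * W := by
      have hcd : Matrix.diagonal v * D = D * Matrix.diagonal v := by
        rw [hD_def, Matrix.diagonal_mul_diagonal, Matrix.diagonal_mul_diagonal,
          show (fun i => v i * ((d i : ℝ) : ℂ)) = fun i => ((d i : ℝ) : ℂ) * v i from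
            funext fun i => mul_comm _ _]
      rw [hspec, hW_def, sandwich, sandwich, hcd]
    -- the candidate star W * η * W is also a norming functional
    have hcand : star W * η * W = η := by
      apply uniq
      · have := dualNorm_unitary hN η (star W) W (Unitary.star_mem hWmem) hWmem
        rw [this, hηd]
      · have hWW : W * star W = 1 := Matrix.mem_unitaryGroup_iff.mp hWmem
        calc (star W * η * W * σ).trace = (star W * ((η * σ) * W)).trace := by
              rw [show star W * η * W * σ = star W * (η * (W * σ)) by noncomm_ring, hWσ,
                show star W * (η * (σ * W)) = star W * ((η * σ) * W) by noncomm_ring]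
          _ = (((η * σ) * W) * star W).trace := Matrix.trace_mul_comm _ _
          _ = (η * σ).trace := by
              rw [show ((η * σ) * W) * star W = (η * σ) * (W * star W) by noncomm_ring, hWW,
                mul_one]
          _ = 1 := hητ
    -- deduce the commutation for M
    have hWη : W * η = η * W := by
      calc W * η = W * (star W * η * W) := by rw [hcand]
        _ = (W * star W) * η * W := by noncomm_ring
        _ = η * W := by rw [Matrix.mem_unitaryGroup_iff.mp hWmem, one_mul]
    apply cancel
    rw [hηUM] at hWη
    calc U * (Matrix.diagonal v * M) * star U
        = W * (U * M * star U) := by rw [hW_def, sandwich]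
      _ = (U * M * star U) * W := hWη
      _ = U * (M * Matrix.diagonal v) * star U := by rw [hW_def, sandwich]
  -- M is diagonal
  have hoff : ∀ i j, i ≠ j → M i j = 0 := by
    intro i j hij
    have hv : ∀ k : Fin n, ((fun k => if k = i then (-1 : ℂ) else 1) k)
        * star ((fun k => if k = i then (-1 : ℂ) else 1) k) = 1 := by
      intro k
      by_cases h : k = i <;> simp [h]
    have h := conj_fix _ hv
    have h' := congrFun (congrFun h i) j
    rw [Matrix.diagonal_mul, Matrix.mul_diagonal] at h'
    simp only [if_true, eq_self_iff_true, if_neg (Ne.symm hij), neg_one_mul, mul_one] at h'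
    -- h' : -M i j = M i j
    linear_combination -h' / 2
  set e : Fin n → ℂ := fun i => M i i with he_def
  have hMdiag : M = Matrix.diagonal e := by
    ext i j
    by_cases h : i = j
    · subst h; rw [Matrix.diagonal_apply_eq]
    · rw [Matrix.diagonal_apply_ne _ h]; exact hoff i j h
  -- trace identity
  have hησ_eq : η * σ = U * (Matrix.diagonal (fun i => e i * (d i : ℂ))) * star U := by
    rw [hηUM, hspec, hD_def, sandwich, hMdiag, Matrix.diagonal_mul_diagonal]
  have htrace_seq : ∑ i, e i * (d i : ℂ) = 1 := by
    calc ∑ i, e i * (d i : ℂ)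
        = (Matrix.diagonal (fun i => e i * (d i : ℂ))).trace := by
          rw [Matrix.trace_diagonal]
      _ = (η * σ).trace := by rw [hησ_eq, trace_conj]
      _ = 1 := hητ
  -- the phase trick: e is nonnegative real
  set r : Fin n → ℝ := fun i => ‖e i‖ with hr_def
  have hr0 : ∀ i, 0 ≤ r i := fun i => norm_nonneg _
  set v : Fin n → ℂ := fun i => if e i = 0 then 1 else (starRingEnd ℂ) (e i) / (r i : ℂ)
    with hv_def
  have hre : ∀ i, e i ≠ 0 → (r i : ℂ) ≠ 0 := by
    intro i h
    simp only [hr_def, ne_eq, Complex.ofReal_eq_zero, norm_eq_zero]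
    exact h
  have hconj_e : ∀ i, (starRingEnd ℂ) (e i) * e i = ((r i : ℂ)) ^ 2 := by
    intro i
    rw [mul_comm, Complex.mul_conj, Complex.normSq_eq_norm_sq, hr_def]
    push_cast
    ring
  have hv_e : ∀ i, v i * e i = (r i : ℂ) := by
    intro i
    by_cases h : e i = 0
    · simp [hv_def, h, hr_def]
    · have hne := hre i h
      simp only [hv_def, if_neg h]
      rw [div_mul_eq_mul_div, hconj_e, sq, mul_div_assoc, div_self hne, mul_one]
  have hv_unit : ∀ k, v k * star (v k) = 1 := by
    intro k
    by_cases h : e k = 0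
    · simp [hv_def, h]
    · have hne := hre k h
      simp only [hv_def, if_neg h]
      have hstar : star ((starRingEnd ℂ) (e k) / (r k : ℂ)) = e k / (r k : ℂ) := by
        rw [Complex.star_def, map_div₀, Complex.conj_conj, Complex.conj_ofReal]
      rw [hstar, div_mul_div_comm, hconj_e, sq, div_self (mul_ne_zero hne hne)]
  -- the phase unitary
  set W : Matrix (Fin n) (Fin n) ℂ := U * Matrix.diagonal v * star U with hW_def
  have hWmem : W ∈ Matrix.unitaryGroup (Fin n) ℂ :=
    mul_mem (mul_mem hU (hdiagmem v hv_unit)) (Unitary.star_mem hU)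
  have hWη : W * η = U * Matrix.diagonal (fun i => (r i : ℂ)) * star U := by
    rw [hηUM, hW_def, sandwich, hMdiag, Matrix.diagonal_mul_diagonal,
      show (fun i => v i * e i) = fun i => (r i : ℂ) from funext hv_e]
  have hdual' : dualNorm N (W * η) = 1 := by
    have h := dualNorm_unitary hN η W 1 hWmem (one_mem _)
    rw [mul_one] at h
    rw [h, hηd]
  have hfun : (fun i => (r i : ℂ) * (d i : ℂ)) = fun i => ((r i * d i : ℝ) : ℂ) := by
    funext i
    push_cast
    ring
  have hWησ : (W * η) * σ = U * Matrix.diagonal (fun i => ((r i * d i : ℝ) : ℂ)) * star U := by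
    rw [hWη, hspec, hD_def, sandwich, Matrix.diagonal_mul_diagonal, hfun]
  set s : ℝ := ∑ i, r i * d i with hs_def
  have htr : ((W * η) * σ).trace = (s : ℂ) := by
    rw [hWησ, trace_conj, Matrix.trace_diagonal, hs_def]
    push_cast
    rfl
  have hs_nonneg : 0 ≤ s := Finset.sum_nonneg fun i _ => mul_nonneg (hr0 i) (hd0 i)
  have hs_le : s ≤ 1 := by
    have h := le_dualNorm hN (W * η) σ (le_of_eq hσ1)
    rw [htr, Complex.norm_of_nonneg hs_nonneg] at h
    exact h.trans (le_of_eq hdual')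
  have hs_ge : 1 ≤ s := by
    have h1 : (1 : ℝ) = ‖(∑ i, e i * (d i : ℂ))‖ := by rw [htrace_seq]; simp
    rw [h1, hs_def]
    refine le_trans (norm_sum_le _ _) (le_of_eq ?_)
    apply Finset.sum_congr rfl
    intro i _
    rw [norm_mul, Complex.norm_real, Real.norm_eq_abs, abs_of_nonneg (hd0 i), hr_def]
  have hs1 : s = 1 := le_antisymm hs_le hs_ge
  have hfix : W * η = η := by
    apply uniq _ hdual'
    rw [htr, hs1]
    norm_num
  have hMr : Matrix.diagonal (fun i => (r i : ℂ)) = M :=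
    cancel _ _ (by rw [← hWη, hfix, hηUM])
  have hη_eq : η = U * Matrix.diagonal (fun i => (r i : ℂ)) * star U := by
    rw [hηUM, hMr]
  -- conclusions
  have hdiagPSD : (Matrix.diagonal (fun i => ((r i : ℝ) : ℂ))).PosSemidef :=
    Matrix.posSemidef_diagonal_iff.mpr fun i => Complex.zero_le_real.mpr (hr0 i)
  have hηPSD : η.PosSemidef := by
    rw [hη_eq, Matrix.star_eq_conjTranspose]
    exact hdiagPSD.mul_mul_conjTranspose_same U
  have hcomm : η * σ = σ * η := by
    have hcd : Matrix.diagonal (fun i => (r i : ℂ)) * D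
        = D * Matrix.diagonal (fun i => (r i : ℂ)) := by
      rw [hD_def, Matrix.diagonal_mul_diagonal, Matrix.diagonal_mul_diagonal,
        show (fun i => ((r i : ℝ) : ℂ) * ((d i : ℝ) : ℂ)) = fun i => ((d i : ℝ) : ℂ) * ((r i : ℝ) : ℂ)
          from funext fun i => mul_comm _ _]
    rw [hη_eq, hspec, sandwich, sandwich, hcd]
  have hησ2 : η * σ = U * Matrix.diagonal (fun i => ((r i * d i : ℝ) : ℂ)) * star U := by
    rw [hη_eq, hspec, hD_def, sandwich, Matrix.diagonal_mul_diagonal, hfun]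
  have hησPSD : (η * σ).PosSemidef := by
    rw [hησ2, Matrix.star_eq_conjTranspose]
    exact (Matrix.posSemidef_diagonal_iff.mpr fun i =>
      Complex.zero_le_real.mpr (mul_nonneg (hr0 i) (hd0 i))).mul_mul_conjTranspose_same U
  exact ⟨hηPSD, hcomm, hησPSD, hητ⟩
end

section
/- Let ‖·‖ be a unitarily invariant norm on M_n(ℂ) that is smooth and strictly convex. Let A ∈ M_n(ℂ) be positive semidefinite with ‖A‖ = 1, let η be the norming functional of A (the unique B with ‖B‖* = 1 and tr(BA) = 1), and set ρ = ηA. Then ρ is a state, and A minimizes the relative entropy with respect to ρ over the positive part of the unit ball: D(ρ||A) ≤ D(ρ||σ) for every positive semidefinite σ ∈ M_n(ℂ) with ‖σ‖ ≤ 1. -/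
open scoped ComplexOrder Matrix

/-- `N` is strictly convex. -/
def IsStrictlyConvexNorm {n : ℕ} (N : Matrix (Fin n) (Fin n) ℂ → ℝ) : Prop :=
  ∀ x y : Matrix (Fin n) (Fin n) ℂ, N x = 1 → N y = 1 → x ≠ y →
    N ((2⁻¹ : ℝ) • (x + y)) < 1

/-- The logarithm of a (positive semidefinite) matrix, by functional calculus applied to
the real logarithm (with the convention `log 0 = 0` on the kernel). -/
noncomputable def matLog {n : ℕ} (A : Matrix (Fin n) (Fin n) ℂ) :
    Matrix (Fin n) (Fin n) ℂ :=
  cfc Real.log A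

open Classical in
/-- The quantum relative entropy `D(ρ‖σ)`, valued in `EReal`: it is
`tr (ρ (log ρ - log σ))` when `ker σ ⊆ ker ρ`, and `+∞` otherwise. -/
noncomputable def relEnt {n : ℕ} (ρ σ : Matrix (Fin n) (Fin n) ℂ) : EReal :=
  if (∀ v : Fin n → ℂ, σ.mulVec v = 0 → ρ.mulVec v = 0) then
    (((ρ * (matLog ρ - matLog σ)).trace).re : EReal)
  else ⊤

namespace S19

open Matrix

variable {n : ℕ} {N : Matrix (Fin n) (Fin n) ℂ → ℝ}

/-- the dual set -/
def dset (N : Matrix (Fin n) (Fin n) ℂ → ℝ) (X : Matrix (Fin n) (Fin n) ℂ) : Set ℝ :=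
  (fun A => ‖(X * A).trace‖) '' {A | N A ≤ 1}

lemma dualNorm_eq_dset (X : Matrix (Fin n) (Fin n) ℂ) : dualNorm N X = sSup (dset N X) := rfl

section
variable (hN : IsUnitarilyInvariantNorm N)
include hN

lemma N_zero : N 0 = 0 := by
  have := hN.2.1 0 0
  simpa using this

lemma N_nonneg (B : Matrix (Fin n) (Fin n) ℂ) : 0 ≤ N B := by
  have h1 := hN.1 B (-B)
  have h2 : N (-B) = N B := by
    have := hN.2.1 (-1) B; simpa using this
  have h0 : N 0 = 0 := N_zero hN
  rw [add_neg_cancel, h0, h2] at h1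
  linarith

lemma dset_nonempty (X : Matrix (Fin n) (Fin n) ℂ) : (dset N X).Nonempty :=
  ⟨_, ⟨0, by simp [Set.mem_setOf_eq, N_zero hN], rfl⟩⟩

omit hN in
lemma mem_dset {B : Matrix (Fin n) (Fin n) ℂ} (hB : N B ≤ 1) (X : Matrix (Fin n) (Fin n) ℂ) :
    ‖(X * B).trace‖ ∈ dset N X :=
  ⟨B, hB, rfl⟩

lemma N_mul_unitary_right {B W : Matrix (Fin n) (Fin n) ℂ}
    (hW : W ∈ Matrix.unitaryGroup (Fin n) ℂ) : N (B * W) = N B := by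
  have := hN.2.2.2 B 1 W (one_mem _) hW
  rwa [one_mul] at this

lemma N_unitary_mul_left {B W : Matrix (Fin n) (Fin n) ℂ}
    (hW : W ∈ Matrix.unitaryGroup (Fin n) ℂ) : N (W * B) = N B := by
  have := hN.2.2.2 B W 1 hW (one_mem _)
  rwa [mul_one] at this

lemma dset_mul_unitary {X W : Matrix (Fin n) (Fin n) ℂ}
    (hW : W ∈ Matrix.unitaryGroup (Fin n) ℂ) : dset N (W * X) = dset N X := by
  ext r
  constructor
  · rintro ⟨B, hB, rfl⟩
    refine ⟨B * W, ?_, ?_⟩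
    · simpa [Set.mem_setOf_eq, N_mul_unitary_right hN hW] using (hB : N B ≤ 1)
    · dsimp only
      congr 1
      rw [← mul_assoc, Matrix.trace_mul_comm (X * B) W]
      simp [mul_assoc]
  · rintro ⟨B, hB, rfl⟩
    refine ⟨B * star W, ?_, ?_⟩
    · have : star W ∈ Matrix.unitaryGroup (Fin n) ℂ := Unitary.star_mem hW
      simpa [Set.mem_setOf_eq, N_mul_unitary_right hN this] using (hB : N B ≤ 1)
    · dsimp only
      congr 1
      rw [mul_assoc, Matrix.trace_mul_comm W (X * (B * star W))]
      simp [mul_assoc, hW.1]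

lemma dset_unitary_mul {X W : Matrix (Fin n) (Fin n) ℂ}
    (hW : W ∈ Matrix.unitaryGroup (Fin n) ℂ) : dset N (X * W) = dset N X := by
  ext r
  constructor
  · rintro ⟨B, hB, rfl⟩
    refine ⟨W * B, ?_, ?_⟩
    · simpa [Set.mem_setOf_eq, N_unitary_mul_left hN hW] using (hB : N B ≤ 1)
    · dsimp only
      congr 1
      rw [mul_assoc]
  · rintro ⟨B, hB, rfl⟩
    refine ⟨star W * B, ?_, ?_⟩
    · have : star W ∈ Matrix.unitaryGroup (Fin n) ℂ := Unitary.star_mem hW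
      simpa [Set.mem_setOf_eq, N_unitary_mul_left hN this] using (hB : N B ≤ 1)
    · dsimp only
      congr 1
      rw [mul_assoc, ← mul_assoc W, hW.2, one_mul]

lemma dualNorm_unitary_conj {X W W' : Matrix (Fin n) (Fin n) ℂ}
    (hW : W ∈ Matrix.unitaryGroup (Fin n) ℂ) (hW' : W' ∈ Matrix.unitaryGroup (Fin n) ℂ) :
    dualNorm N (W * X * W') = dualNorm N X := by
  rw [dualNorm_eq_dset, dset_unitary_mul hN hW', dset_mul_unitary hN hW, dualNorm_eq_dset]

end




open Matrix

variable {n : ℕ}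

lemma conj_mul₂ {U : Matrix (Fin n) (Fin n) ℂ} (hU : star U * U = 1)
    (P Q : Matrix (Fin n) (Fin n) ℂ) :
    (U * P * star U) * (U * Q * star U) = U * (P * Q) * star U := by
  calc (U * P * star U) * (U * Q * star U)
      = U * (P * ((star U * U) * (Q * star U))) := by simp only [mul_assoc]
    _ = U * (P * Q) * star U := by rw [hU, one_mul]; simp only [mul_assoc]

lemma conj_inj {U : Matrix (Fin n) (Fin n) ℂ} (hU : star U * U = 1)
    {X Y : Matrix (Fin n) (Fin n) ℂ} (h : U * X * star U = U * Y * star U) : X = Y := by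
  have e : ∀ Z : Matrix (Fin n) (Fin n) ℂ, star U * (U * Z * star U) * U = Z := by
    intro Z
    simp only [mul_assoc]
    rw [hU, mul_one, ← mul_assoc, hU, one_mul]
  rw [← e X, h, e Y]

lemma trace_conj {U : Matrix (Fin n) (Fin n) ℂ} (hU : star U * U = 1)
    (X : Matrix (Fin n) (Fin n) ℂ) : (U * X * star U).trace = X.trace := by
  rw [mul_assoc, Matrix.trace_mul_comm, mul_assoc, hU, mul_one]

lemma trace_conj_mul {U : Matrix (Fin n) (Fin n) ℂ} (hU : star U * U = 1)
    (X Y : Matrix (Fin n) (Fin n) ℂ) :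
    ((U * X * star U) * Y).trace = (X * (star U * Y * U)).trace := by
  calc ((U * X * star U) * Y).trace = (U * (X * (star U * Y))).trace := by
        simp only [mul_assoc]
    _ = ((X * (star U * Y)) * U).trace := Matrix.trace_mul_comm _ _
    _ = (X * (star U * Y * U)).trace := by simp only [mul_assoc]

lemma entry_conj_diag (C : Matrix (Fin n) (Fin n) ℂ) (d : Fin n → ℂ) (k : Fin n) :
    (star C * Matrix.diagonal d * C) k k = ∑ j, d j * (Complex.normSq (C j k) : ℂ) := by
  rw [Matrix.mul_apply]
  refine Finset.sum_congr rfl fun j _ => ?_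
  rw [Matrix.mul_diagonal, Matrix.star_apply]
  have h1 : star (C j k) * C j k = (Complex.normSq (C j k) : ℂ) := by
    rw [Complex.star_def, mul_comm, Complex.mul_conj]
  calc star (C j k) * d j * C j k = d j * (star (C j k) * C j k) := by ring
    _ = d j * (Complex.normSq (C j k) : ℂ) := by rw [h1]

lemma trace_diag_mul (d : Fin n → ℂ) (M : Matrix (Fin n) (Fin n) ℂ) :
    (Matrix.diagonal d * M).trace = ∑ k, d k * M k k := by
  simp [Matrix.trace, Matrix.diag, Matrix.diagonal_mul]

lemma col_normSq_one {C : Matrix (Fin n) (Fin n) ℂ} (hC : star C * C = 1) (k : Fin n) :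
    ∑ j, Complex.normSq (C j k) = 1 := by
  have h := congrFun (congrFun hC k) k
  rw [Matrix.mul_apply, Matrix.one_apply_eq] at h
  have : ∑ j, ((Complex.normSq (C j k) : ℂ)) = 1 := by
    rw [← h]
    refine Finset.sum_congr rfl fun j _ => ?_
    rw [Matrix.star_apply]
    rw [Complex.star_def, mul_comm, Complex.mul_conj]
  have h2 : ((∑ j, Complex.normSq (C j k) : ℝ) : ℂ) = ((1 : ℝ) : ℂ) := by
    push_cast
    simpa using this
  exact_mod_cast h2

lemma star_mulVec_cancel {U : Matrix (Fin n) (Fin n) ℂ} (hU : star U * U = 1)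
    (x : Fin n → ℂ) : star U *ᵥ (U *ᵥ x) = x := by
  rw [Matrix.mulVec_mulVec, hU, Matrix.one_mulVec]

lemma jensen_log (s p : Fin n → ℝ) (hs : ∀ j, 0 ≤ s j) (hp : ∀ j, 0 ≤ p j)
    (hps : ∀ j, s j = 0 → p j = 0) (hp1 : ∑ j, p j = 1) :
    ∑ j, p j * Real.log (s j) ≤ Real.log (∑ j, p j * s j) := by
  set q := ∑ j, p j * s j with hq
  have hq0 : 0 ≤ q := Finset.sum_nonneg fun j _ => mul_nonneg (hp j) (hs j)
  have hqpos : 0 < q := by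
    rcases hq0.lt_or_eq with h | h
    · exact h
    · exfalso
      have hz : ∀ j ∈ Finset.univ, p j * s j = 0 :=
        (Finset.sum_eq_zero_iff_of_nonneg (fun j _ => mul_nonneg (hp j) (hs j))).mp h.symm
      have : ∀ j, p j = 0 := by
        intro j
        rcases eq_or_ne (s j) 0 with h' | h'
        · exact hps j h'
        · have := hz j (Finset.mem_univ j)
          rcases mul_eq_zero.mp this with h'' | h''
          · exact h''
          · exact absurd h'' h'
      rw [Finset.sum_congr rfl fun j _ => this j] at hp1
      simp at hp1
  have key : ∀ j, p j * Real.log (s j) ≤ p j * (Real.log q - 1) + p j * s j / q := by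
    intro j
    rcases eq_or_ne (s j) 0 with h' | h'
    · rw [hps j h']
      simp
    · have hsj : 0 < s j := (hs j).lt_of_ne (Ne.symm h')
      have : Real.log (s j) - Real.log q ≤ s j / q - 1 := by
        rw [← Real.log_div (ne_of_gt hsj) (ne_of_gt hqpos)]
        exact Real.log_le_sub_one_of_pos (div_pos hsj hqpos)
      have h2 := mul_le_mul_of_nonneg_left this (hp j)
      have h3 : p j * (s j / q) = p j * s j / q := by ring
      nlinarith [h2]
  have hsum := Finset.sum_le_sum fun j (_ : j ∈ Finset.univ) => key j
  have h1 : ∑ j, (p j * (Real.log q - 1) + p j * s j / q) = Real.log q := by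
    rw [Finset.sum_add_distrib, ← Finset.sum_mul, hp1, ← Finset.sum_div, ← hq, one_mul,
      div_self (ne_of_gt hqpos)]
    ring
  rw [h1] at hsum
  exact hsum

end S19

section Main

open Matrix

theorem statement19 {n : ℕ} (N : Matrix (Fin n) (Fin n) ℂ → ℝ)
    (hN : IsUnitarilyInvariantNorm N) (hsm : IsSmoothNorm N)
    (hsc : IsStrictlyConvexNorm N)
    (A : Matrix (Fin n) (Fin n) ℂ) (hA : A.PosSemidef) (hA1 : N A = 1)
    (η : Matrix (Fin n) (Fin n) ℂ)
    (hη : dualNorm N η = 1 ∧ (η * A).trace = 1) :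
    (η * A).PosSemidef ∧ (η * A).trace = 1 ∧
      ∀ σ : Matrix (Fin n) (Fin n) ℂ, σ.PosSemidef → N σ ≤ 1 →
        relEnt (η * A) A ≤ relEnt (η * A) σ := by
  classical
  obtain ⟨hηd, hηtr⟩ := hη
  have hA0 : A ≠ 0 := by
    rintro rfl
    rw [mul_zero, Matrix.trace_zero] at hηtr
    exact one_ne_zero hηtr.symm
  have hAH : A.IsHermitian := hA.1
  set Uc : Matrix (Fin n) (Fin n) ℂ := ↑(hAH.eigenvectorUnitary) with hUcdef
  have hUmem : Uc ∈ Matrix.unitaryGroup (Fin n) ℂ := hAH.eigenvectorUnitary.2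
  have hU1 : star Uc * Uc = 1 := hUmem.1
  have hU1' : Uc * star Uc = 1 := hUmem.2
  set a : Fin n → ℝ := hAH.eigenvalues with hadef
  have ha0 : ∀ k, 0 ≤ a k := fun k => hA.eigenvalues_nonneg k
  have hspec : A = Uc * Matrix.diagonal (RCLike.ofReal ∘ a) * star Uc := hAH.spectral_theorem
  set F : Matrix (Fin n) (Fin n) ℂ := star Uc * η * Uc with hFdef
  have hηF : η = Uc * F * star Uc := by
    rw [hFdef]
    calc η = (Uc * star Uc) * η * (Uc * star Uc) := by rw [hU1', one_mul, mul_one]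
      _ = Uc * (star Uc * η * Uc) * star Uc := by simp only [mul_assoc]
  -- characterization of the unique norming functional
  have hchar : ∀ X : Matrix (Fin n) (Fin n) ℂ,
      dualNorm N X = 1 → (X * A).trace = 1 → X = η := by
    intro X h1 h2
    obtain ⟨B₀, _, huniq⟩ := hsm A hA0
    have e1 := huniq X ⟨h1, by rw [hA1]; simpa using h2⟩
    have e2 := huniq η ⟨hηd, by rw [hA1]; simpa using hηtr⟩
    rw [e1, e2]
  -- boundedness of the dual set of η
  have hBdd : BddAbove (S19.dset N η) := by
    by_contra hb
    have h0 := csSup_of_not_bddAbove (α := ℝ) hb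
    rw [Real.sSup_empty] at h0
    rw [S19.dualNorm_eq_dset, h0] at hηd
    exact one_ne_zero hηd.symm
  have htr_le : ∀ B, N B ≤ 1 → ‖(η * B).trace‖ ≤ 1 := by
    intro B hB
    have := le_csSup hBdd (S19.mem_dset hB η)
    rwa [← S19.dualNorm_eq_dset, hηd] at this
  -- diagonal unitary conjugations fix η; F is diagonal
  have hzmem : ∀ z : Fin n → ℂ, (∀ j, z j * star (z j) = 1) →
      Matrix.diagonal z ∈ Matrix.unitaryGroup (Fin n) ℂ := by
    intro z hz
    rw [Matrix.mem_unitaryGroup_iff, Matrix.star_eq_conjTranspose, Matrix.diagonal_conjTranspose,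
      Matrix.diagonal_mul_diagonal]
    ext i j
    rcases eq_or_ne i j with rfl | hij
    · rw [Matrix.diagonal_apply_eq, Matrix.one_apply_eq]
      exact hz i
    · rw [Matrix.diagonal_apply_ne _ hij, Matrix.one_apply_ne hij]
  have hWmem : ∀ z : Fin n → ℂ, (∀ j, z j * star (z j) = 1) →
      Uc * Matrix.diagonal z * star Uc ∈ Matrix.unitaryGroup (Fin n) ℂ := by
    intro z hz
    exact mul_mem (mul_mem hUmem (hzmem z hz)) (Unitary.star_mem hUmem)
  -- the trace of (Uc * diagonal d * star Uc) * A
  have hAd : star Uc * A * Uc = Matrix.diagonal (RCLike.ofReal ∘ a) := by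
    conv_lhs => rw [hspec]
    calc star Uc * (Uc * Matrix.diagonal (RCLike.ofReal ∘ a) * star Uc) * Uc
        = (star Uc * Uc) * Matrix.diagonal (RCLike.ofReal ∘ a) * (star Uc * Uc) := by
          simp only [mul_assoc]
      _ = _ := by rw [hU1, one_mul, mul_one]
  have htrace_dA : ∀ d : Fin n → ℂ,
      ((Uc * Matrix.diagonal d * star Uc) * A).trace = ∑ k, d k * ((a k : ℝ) : ℂ) := by
    intro d
    rw [S19.trace_conj_mul hU1, hAd, S19.trace_diag_mul]
    refine Finset.sum_congr rfl fun k _ => ?_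
    rw [Matrix.diagonal_apply_eq]
    rfl
  -- sign-flip conjugation: F is diagonal
  have hflip : ∀ k : Fin n,
      Matrix.diagonal (fun j => if j = k then (-1:ℂ) else 1) * F *
        Matrix.diagonal (fun j => if j = k then (-1:ℂ) else 1) = F := by
    intro k
    set z : Fin n → ℂ := fun j => if j = k then (-1:ℂ) else 1 with hzdef
    have hz1 : ∀ j, z j * star (z j) = 1 := by
      intro j; by_cases h : j = k <;> simp [hzdef, h]
    have hWm := hWmem z hz1
    set W : Matrix (Fin n) (Fin n) ℂ := Uc * Matrix.diagonal z * star Uc with hWdef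
    have hzstar : star z = z := by
      funext j
      by_cases h : j = k <;> simp [hzdef, h]
    have hWstar : star W = W := by
      rw [hWdef, StarMul.star_mul, StarMul.star_mul, star_star,
        Matrix.star_eq_conjTranspose (Matrix.diagonal z), Matrix.diagonal_conjTranspose, hzstar,
        mul_assoc]
    have hzDz : Matrix.diagonal z * Matrix.diagonal (RCLike.ofReal ∘ a) * Matrix.diagonal z
        = Matrix.diagonal (RCLike.ofReal ∘ a) := by
      rw [Matrix.diagonal_mul_diagonal, Matrix.diagonal_mul_diagonal]
      have : (fun i => z i * (RCLike.ofReal ∘ a) i * z i) = (RCLike.ofReal ∘ a) := by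
        funext i
        by_cases h : i = k <;> simp [hzdef, h] <;> ring
      rw [this]
    have hWAW : star W * A * W = A := by
      rw [hWstar, hWdef]
      conv_lhs => rw [hspec]
      rw [S19.conj_mul₂ hU1, S19.conj_mul₂ hU1, hzDz, ← hspec]
    have hη' : W * η * star W = η := by
      apply hchar
      · exact (S19.dualNorm_unitary_conj (X := η) hN hWm (Unitary.star_mem hWm)).trans hηd
      · calc ((W * η * star W) * A).trace
            = (W * ((η * star W) * A)).trace := by simp only [mul_assoc]
          _ = (((η * star W) * A) * W).trace := Matrix.trace_mul_comm _ _
          _ = (η * (star W * A * W)).trace := by simp only [mul_assoc]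
          _ = 1 := by rw [hWAW, hηtr]
    have : W * η * star W = Uc * (Matrix.diagonal z * F * Matrix.diagonal z) * star Uc := by
      rw [hWstar, hWdef, hηF]
      rw [S19.conj_mul₂ hU1, S19.conj_mul₂ hU1]
    rw [this] at hη'
    have := S19.conj_inj hU1 (hη'.trans hηF)
    exact this
  have hoffdiag : ∀ i j : Fin n, i ≠ j → F i j = 0 := by
    intro i j hij
    have h := congrFun (congrFun (hflip j) i) j
    rw [Matrix.mul_diagonal, Matrix.diagonal_mul, if_neg hij, if_pos rfl] at h
    linear_combination (-1/2 : ℂ) * h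
  obtain ⟨f, hfdef⟩ : ∃ f : Fin n → ℂ, ∀ k, f k = F k k := ⟨_, fun _ => rfl⟩
  have hFdiagonal : F = Matrix.diagonal f := by
    ext i j
    by_cases h : i = j
    · subst h; rw [Matrix.diagonal_apply_eq, hfdef]
    · rw [Matrix.diagonal_apply_ne _ h]; exact hoffdiag i j h
  have hηdiag : η = Uc * Matrix.diagonal f * star Uc := by rw [hηF, hFdiagonal]
  have hsum_fa : ∑ k, f k * ((a k : ℝ) : ℂ) = 1 := by
    rw [← htrace_dA f, ← hηdiag, hηtr]
  -- every f k equals |f k|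
  have hfk : ∀ k, f k = ((‖f k‖ : ℝ) : ℂ) := by
    intro k
    rcases eq_or_ne (a k) 0 with hak | hak
    · -- zero eigenvalue: zeroing out the k-th entry gives another norming functional
      suffices hf0 : f k = 0 by rw [hf0]; simp
      set z : Fin n → ℂ := fun j => if j = k then (-1:ℂ) else 1 with hzdef
      have hz1 : ∀ j, z j * star (z j) = 1 := by
        intro j; by_cases h : j = k <;> simp [hzdef, h]
      have hWm := hWmem z hz1
      set W : Matrix (Fin n) (Fin n) ℂ := Uc * Matrix.diagonal z * star Uc with hWdef
      obtain ⟨f₀, hf₀⟩ : ∃ f₀ : Fin n → ℂ, ∀ j, f₀ j = if j = k then 0 else f j :=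
        ⟨_, fun _ => rfl⟩
      set η₀ : Matrix (Fin n) (Fin n) ℂ := (2⁻¹ : ℂ) • (η + W * η) with hη₀def
      have hWη : W * η = Uc * Matrix.diagonal (fun j => z j * f j) * star Uc := by
        conv_lhs => rw [hWdef, hηdiag]
        rw [S19.conj_mul₂ hU1, Matrix.diagonal_mul_diagonal]
      have hD : (2⁻¹ : ℂ) • (Matrix.diagonal f + Matrix.diagonal fun j => z j * f j)
          = Matrix.diagonal f₀ := by
        ext i j
        rw [Matrix.smul_apply, Matrix.add_apply]
        rcases eq_or_ne i j with rfl | hij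
        · rw [Matrix.diagonal_apply_eq, Matrix.diagonal_apply_eq, Matrix.diagonal_apply_eq,
            hf₀ i]
          by_cases h : i = k
          · have hzj : z i = -1 := by simp [hzdef, h]
            rw [if_pos h, hzj, neg_one_mul, add_neg_cancel, smul_zero]
          · have hzj : z i = 1 := by simp [hzdef, h]
            rw [if_neg h, hzj, one_mul, smul_eq_mul]
            ring
        · rw [Matrix.diagonal_apply_ne _ hij, Matrix.diagonal_apply_ne _ hij,
            Matrix.diagonal_apply_ne _ hij, add_zero, smul_zero]
      have hη₀eq : η₀ = Uc * Matrix.diagonal f₀ * star Uc := by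
        rw [hη₀def, hWη]
        conv_lhs => rw [hηdiag]
        rw [← Matrix.add_mul, ← Matrix.mul_add, ← hD]
        rw [mul_smul_comm, smul_mul_assoc]
      -- dual set of W * η
      have hBddW : BddAbove (S19.dset N (W * η)) := by
        rw [S19.dset_mul_unitary hN hWm]; exact hBdd
      have hdW : dualNorm N (W * η) = 1 := by
        rw [S19.dualNorm_eq_dset, S19.dset_mul_unitary hN hWm, ← S19.dualNorm_eq_dset, hηd]
      -- all elements of the dual set of η₀ are at most 1
      have hub : ∀ r ∈ S19.dset N η₀, r ≤ 1 := by
        rintro r ⟨B, hB, rfl⟩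
        have h1 : ‖(η * B).trace‖ ≤ 1 := htr_le B hB
        have h2 : ‖((W * η) * B).trace‖ ≤ 1 := by
          have := le_csSup hBddW (S19.mem_dset hB (W * η))
          rwa [← S19.dualNorm_eq_dset, hdW] at this
        have h3 : (η₀ * B).trace = (2⁻¹ : ℂ) * ((η * B).trace + ((W * η) * B).trace) := by
          rw [hη₀def, Matrix.smul_mul, Matrix.trace_smul, Matrix.add_mul, Matrix.trace_add]
          simp
        dsimp only
        rw [h3]
        rw [norm_mul]
        calc ‖(2⁻¹:ℂ)‖ * ‖(η * B).trace + ((W * η) * B).trace‖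
            ≤ ‖(2⁻¹:ℂ)‖ * (‖(η * B).trace‖
              + ‖((W * η) * B).trace‖) := by
              refine mul_le_mul_of_nonneg_left ?_ (norm_nonneg _)
              exact norm_add_le _ _
          _ ≤ ‖(2⁻¹:ℂ)‖ * 2 := by
              refine mul_le_mul_of_nonneg_left ?_ (norm_nonneg _)
              linarith
          _ = 1 := by norm_num
      have htrη₀ : (η₀ * A).trace = 1 := by
        rw [hη₀eq, htrace_dA]
        rw [← hsum_fa]
        refine Finset.sum_congr rfl fun j _ => ?_
        by_cases h : j = k
        · subst h
          rw [hak]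
          simp
        · rw [hf₀ j, if_neg h]
      have hd₀ : dualNorm N η₀ = 1 := by
        refine le_antisymm (csSup_le (S19.dset_nonempty hN η₀) hub) ?_
        have hmem1 : ‖(η₀ * A).trace‖ ∈ S19.dset N η₀ :=
          S19.mem_dset (le_of_eq hA1) η₀
        have := le_csSup ⟨1, fun r hr => hub r hr⟩ hmem1
        rwa [htrη₀, norm_one] at this
      have hη₀η : η₀ = η := hchar η₀ hd₀ htrη₀
      have : Matrix.diagonal f₀ = Matrix.diagonal f := by
        apply S19.conj_inj hU1
        rw [← hη₀eq, ← hηdiag, hη₀η]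
      have h0 := congrFun (congrFun this k) k
      rw [Matrix.diagonal_apply_eq, Matrix.diagonal_apply_eq, hf₀ k, if_pos rfl] at h0
      rw [hfdef] at h0 ⊢
      exact h0.symm
    · -- nonzero eigenvalue: rotate the phase of f k
      rcases eq_or_ne (f k) 0 with hf0 | hf0
      · rw [hf0]; simp
      have habs : (0:ℝ) < ‖f k‖ := by
        simpa [norm_pos_iff] using hf0
      set z : Fin n → ℂ := fun j =>
        if j = k then (starRingEnd ℂ) (f k) / ((‖f k‖ : ℝ) : ℂ) else 1 with hzdef
      have hc : ((‖f k‖ : ℝ) : ℂ) ≠ 0 := by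
        exact_mod_cast ne_of_gt habs
      have hsq : ((‖f k‖ ^ 2 : ℝ) : ℂ)
          = ((‖f k‖ : ℝ) : ℂ) * ((‖f k‖ : ℝ) : ℂ) := by
        push_cast; ring
      have hzk0 : z k = (starRingEnd ℂ) (f k) / ((‖f k‖ : ℝ) : ℂ) := by
        simp [hzdef]
      have hzk : z k * f k = ((‖f k‖ : ℝ) : ℂ) := by
        rw [hzk0, div_mul_eq_mul_div, mul_comm ((starRingEnd ℂ) (f k)) (f k), Complex.mul_conj,
          ← Complex.sq_norm, hsq, mul_div_assoc, div_self hc, mul_one]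
      have hz1 : ∀ j, z j * star (z j) = 1 := by
        intro j
        by_cases h : j = k
        · have hzj : z j = (starRingEnd ℂ) (f k) / ((‖f k‖ : ℝ) : ℂ) := by
            simp [hzdef, h]
          rw [hzj, Complex.star_def, map_div₀, Complex.conj_conj, Complex.conj_ofReal,
            div_mul_div_comm, mul_comm ((starRingEnd ℂ) (f k)) (f k), Complex.mul_conj,
            ← Complex.sq_norm, hsq, div_self (mul_ne_zero hc hc)]
        · simp [hzdef, h]
      have hWm := hWmem z hz1
      set W : Matrix (Fin n) (Fin n) ℂ := Uc * Matrix.diagonal z * star Uc with hWdef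
      have hWη : W * η = Uc * Matrix.diagonal (fun j => z j * f j) * star Uc := by
        conv_lhs => rw [hWdef, hηdiag]
        rw [S19.conj_mul₂ hU1, Matrix.diagonal_mul_diagonal]
      have hBddW : BddAbove (S19.dset N (W * η)) := by
        rw [S19.dset_mul_unitary hN hWm]; exact hBdd
      have hdW : dualNorm N (W * η) = 1 := by
        rw [S19.dualNorm_eq_dset, S19.dset_mul_unitary hN hWm, ← S19.dualNorm_eq_dset, hηd]
      have hle : ‖((W * η) * A).trace‖ ≤ 1 := by
        have := le_csSup hBddW (S19.mem_dset (le_of_eq hA1) (W * η))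
        rwa [← S19.dualNorm_eq_dset, hdW] at this
      have htrW : ((W * η) * A).trace
          = 1 + ((a k : ℝ) : ℂ) * (((‖f k‖ : ℝ) : ℂ) - f k) := by
        rw [hWη, htrace_dA]
        have hsplit : ∀ j, (z j * f j) * ((a j : ℝ) : ℂ)
            = f j * ((a j : ℝ) : ℂ)
              + (if j = k then ((a k : ℝ) : ℂ) * (((‖f k‖ : ℝ) : ℂ) - f k)
                else 0) := by
          intro j
          by_cases h : j = k
          · subst h
            rw [if_pos rfl, hzk]
            ring
          · have hzj : z j = 1 := by simp [hzdef, h]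
            rw [if_neg h, hzj, one_mul, add_zero]
        rw [Finset.sum_congr rfl fun j _ => hsplit j, Finset.sum_add_distrib, hsum_fa,
          Finset.sum_ite_eq' Finset.univ k]
        simp
      rw [htrW] at hle
      have hre : (1 + ((a k : ℝ) : ℂ) * (((‖f k‖ : ℝ) : ℂ) - f k)).re
          = 1 + a k * (‖f k‖ - (f k).re) := by
        rw [Complex.add_re, Complex.re_ofReal_mul, Complex.sub_re, Complex.ofReal_re,
          Complex.one_re]
      have hrele := Complex.re_le_norm
        (1 + ((a k : ℝ) : ℂ) * (((‖f k‖ : ℝ) : ℂ) - f k))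
      rw [hre] at hrele
      have hak' : 0 < a k := (ha0 k).lt_of_ne (Ne.symm hak)
      have h2 : ‖f k‖ - (f k).re ≤ 0 := by nlinarith [hrele.trans hle]
      have h3 : (f k).re = ‖f k‖ :=
        le_antisymm (Complex.re_le_norm (f k)) (by linarith)
      have him : (f k).im = 0 := by
        have h4 := Complex.sq_norm (f k)
        rw [Complex.normSq_apply] at h4
        nlinarith [h4, h3]
      refine Complex.ext ?_ ?_
      · rw [Complex.ofReal_re]; exact h3
      · rw [Complex.ofReal_im]; exact him
  -- positive part
  -- positive part
  obtain ⟨φ, hφdef⟩ : ∃ φ : Fin n → ℝ, ∀ k, φ k = ‖f k‖ := ⟨_, fun _ => rfl⟩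
  have hφ0 : ∀ k, 0 ≤ φ k := fun k => (hφdef k) ▸ norm_nonneg _
  have hfφ : ∀ k, f k = ((φ k : ℝ) : ℂ) := fun k => by rw [hφdef k]; exact hfk k
  obtain ⟨g, hgdef⟩ : ∃ g : Fin n → ℝ, ∀ k, g k = φ k * a k := ⟨_, fun _ => rfl⟩
  have hg0 : ∀ k, 0 ≤ g k := fun k => (hgdef k) ▸ mul_nonneg (hφ0 k) (ha0 k)
  have hρ : η * A = Uc * Matrix.diagonal (fun k => ((g k : ℝ) : ℂ)) * star Uc := by
    conv_lhs => rw [hηdiag, hspec]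
    rw [S19.conj_mul₂ hU1, Matrix.diagonal_mul_diagonal]
    have : (fun i => f i * (RCLike.ofReal ∘ a) i) = (fun k => ((g k : ℝ) : ℂ)) := by
      funext i
      rw [hfφ i, hgdef i]
      show ((φ i : ℝ) : ℂ) * ((a i : ℝ) : ℂ) = _
      push_cast
      ring
    rw [this]
  have hg1 : ∑ k, g k = 1 := by
    have h : ((∑ k, g k : ℝ) : ℂ) = 1 := by
      push_cast
      rw [← hsum_fa]
      refine Finset.sum_congr rfl fun k _ => ?_
      rw [hfφ k, hgdef k]
      push_cast
      ring
    exact_mod_cast h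
  have hρPSD : (η * A).PosSemidef := by
    rw [hρ, Matrix.star_eq_conjTranspose]
    refine Matrix.PosSemidef.mul_mul_conjTranspose_same ?_ Uc
    refine Matrix.posSemidef_diagonal_iff.mpr fun k => ?_
    exact_mod_cast hg0 k
  refine ⟨hρPSD, hηtr, ?_⟩
  intro σ hσ hσ1
  -- kernel conditions
  have hkerA : ∀ v : Fin n → ℂ, A.mulVec v = 0 → (η * A).mulVec v = 0 := by
    intro v hv
    rw [← Matrix.mulVec_mulVec, hv, Matrix.mulVec_zero]
  by_cases hker : ∀ v : Fin n → ℂ, σ.mulVec v = 0 → (η * A).mulVec v = 0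
  swap
  · rw [relEnt, if_pos hkerA, relEnt, if_neg hker]
    exact le_top
  rw [relEnt, if_pos hkerA, relEnt, if_pos hker, EReal.coe_le_coe_iff]
  have hexp : ∀ X : Matrix (Fin n) (Fin n) ℂ,
      ((η * A) * (matLog (η * A) - X)).trace.re
        = ((η * A) * matLog (η * A)).trace.re - ((η * A) * X).trace.re := by
    intro X
    rw [mul_sub, Matrix.trace_sub, Complex.sub_re]
  rw [hexp, hexp]
  have hmain : ((η * A) * matLog σ).trace.re ≤ ((η * A) * matLog A).trace.re := by
    have hLA : matLog A = Uc * Matrix.diagonal (RCLike.ofReal ∘ Real.log ∘ a) * star Uc := by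
      rw [matLog, hAH.cfc_eq]
      rfl
    have htrρ : ∀ X : Matrix (Fin n) (Fin n) ℂ,
        ((η * A) * X).trace = ∑ k, ((g k : ℝ) : ℂ) * ((star Uc * X * Uc) k k) := by
      intro X
      rw [hρ, S19.trace_conj_mul hU1, S19.trace_diag_mul]
    have hσH : σ.IsHermitian := hσ.1
    set Vc : Matrix (Fin n) (Fin n) ℂ := ↑(hσH.eigenvectorUnitary) with hVcdef
    have hVmem : Vc ∈ Matrix.unitaryGroup (Fin n) ℂ := hσH.eigenvectorUnitary.2
    have hV1 : star Vc * Vc = 1 := hVmem.1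
    have hV1' : Vc * star Vc = 1 := hVmem.2
    set s : Fin n → ℝ := hσH.eigenvalues with hsdef
    have hs0 : ∀ j, 0 ≤ s j := fun j => hσ.eigenvalues_nonneg j
    have hσspec : σ = Vc * Matrix.diagonal (RCLike.ofReal ∘ s) * star Vc := hσH.spectral_theorem
    have hLσ : matLog σ = Vc * Matrix.diagonal (RCLike.ofReal ∘ Real.log ∘ s) * star Vc := by
      rw [matLog, hσH.cfc_eq]
      rfl
    set C : Matrix (Fin n) (Fin n) ℂ := star Vc * Uc with hCdef
    have hCstar : star C = star Uc * Vc := by rw [hCdef, StarMul.star_mul, star_star]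
    have hC1 : star C * C = 1 := by
      rw [hCstar, hCdef]
      calc (star Uc * Vc) * (star Vc * Uc) = star Uc * ((Vc * star Vc) * Uc) := by
            simp only [mul_assoc]
        _ = 1 := by rw [hV1', one_mul, hU1]
    have hconv : ∀ d : Fin n → ℂ, star Uc * (Vc * Matrix.diagonal d * star Vc) * Uc
        = star C * Matrix.diagonal d * C := by
      intro d
      rw [hCstar, hCdef]
      simp only [mul_assoc]
    obtain ⟨p, hpdef⟩ : ∃ p : Fin n → Fin n → ℝ, ∀ k j, p k j = Complex.normSq (C j k) :=
      ⟨_, fun _ _ => rfl⟩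
    have hp0 : ∀ k j, 0 ≤ p k j := fun k j => (hpdef k j) ▸ Complex.normSq_nonneg _
    have hp1 : ∀ k, ∑ j, p k j = 1 := by
      intro k
      rw [Finset.sum_congr rfl fun j _ => hpdef k j]
      exact S19.col_normSq_one hC1 k
    obtain ⟨q, hqdef⟩ : ∃ q : Fin n → ℝ, ∀ k, q k = ∑ j, p k j * s j := ⟨_, fun _ => rfl⟩
    have hentry : ∀ (d : Fin n → ℝ) (k : Fin n),
        (star Uc * (Vc * Matrix.diagonal ((RCLike.ofReal : ℝ → ℂ) ∘ d) * star Vc) * Uc) k k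
          = ((∑ j, p k j * d j : ℝ) : ℂ) := by
      intro d k
      rw [hconv, S19.entry_conj_diag]
      have hterm : ∀ j : Fin n, (RCLike.ofReal ∘ d) j * ((Complex.normSq (C j k) : ℝ) : ℂ)
          = ((p k j * d j : ℝ) : ℂ) := by
        intro j
        rw [hpdef k j]
        show ((d j : ℝ) : ℂ) * _ = _
        push_cast
        ring
      rw [Finset.sum_congr rfl fun j _ => hterm j, ← Complex.ofReal_sum]
    have hq_entry : ∀ k, (star Uc * σ * Uc) k k = ((q k : ℝ) : ℂ) := by
      intro k
      conv_lhs => rw [hσspec]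
      rw [hentry s k, hqdef k]
    have hL_entry : ∀ k, (star Uc * matLog σ * Uc) k k
        = ((∑ j, p k j * Real.log (s j) : ℝ) : ℂ) := by
      intro k
      rw [hLσ]
      exact hentry (Real.log ∘ s) k
    have hCzero : ∀ k, g k ≠ 0 → ∀ j, s j = 0 → C j k = 0 := by
      intro k hg j hsj
      have hv : σ.mulVec (⇑(hσH.eigenvectorBasis j)) = 0 := by
        rw [hσH.mulVec_eigenvectorBasis]
        rw [show hσH.eigenvalues j = s j from rfl, hsj, zero_smul]
      have hρv := hker _ hv
      rw [hρ, ← Matrix.mulVec_mulVec, ← Matrix.mulVec_mulVec] at hρv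
      have h2 : Matrix.diagonal (fun k => ((g k : ℝ) : ℂ)) *ᵥ
          (star Uc *ᵥ ⇑(hσH.eigenvectorBasis j)) = 0 := by
        have h3 := congrArg (fun x => star Uc *ᵥ x) hρv
        dsimp only at h3
        rwa [S19.star_mulVec_cancel hU1, Matrix.mulVec_zero] at h3
      have h4 := congrFun h2 k
      rw [Matrix.mulVec_diagonal] at h4
      have h5 : (star Uc *ᵥ ⇑(hσH.eigenvectorBasis j)) k = 0 := by
        have hgC : ((g k : ℝ) : ℂ) ≠ 0 := by exact_mod_cast hg
        simpa [Pi.zero_apply] using (mul_eq_zero.mp h4).resolve_left hgC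
      have h6 : (star Uc *ᵥ ⇑(hσH.eigenvectorBasis j)) k = (star C) k j := by
        rw [hCstar, Matrix.mul_apply, Matrix.mulVec, dotProduct]
        refine Finset.sum_congr rfl fun i _ => ?_
        congr 1
      rw [h6] at h5
      have h7 := congrArg star h5
      rwa [Matrix.star_apply, star_star, star_zero] at h7
    have hq0 : ∀ k, 0 ≤ q k := fun k =>
      (hqdef k) ▸ Finset.sum_nonneg fun j _ => mul_nonneg (hp0 k j) (hs0 j)
    have hqpos : ∀ k, g k ≠ 0 → 0 < q k := by
      intro k hg
      rcases (hq0 k).lt_or_eq with h | h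
      · exact h
      exfalso
      have hz : ∀ j ∈ Finset.univ, p k j * s j = 0 :=
        (Finset.sum_eq_zero_iff_of_nonneg (fun j _ => mul_nonneg (hp0 k j) (hs0 j))).mp
          (by rw [← hqdef k]; exact h.symm)
      have hpz : ∀ j, p k j = 0 := by
        intro j
        rcases eq_or_ne (s j) 0 with h' | h'
        · rw [hpdef k j, hCzero k hg j h']
          simp
        · exact (mul_eq_zero.mp (hz j (Finset.mem_univ j))).resolve_right h'
      have hcontr := hp1 k
      rw [Finset.sum_congr rfl fun j _ => hpz j] at hcontr
      simp at hcontr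
    have hφq : ∑ k, φ k * q k ≤ 1 := by
      have htr : (η * σ).trace = ((∑ k, φ k * q k : ℝ) : ℂ) := by
        rw [hηdiag, S19.trace_conj_mul hU1, S19.trace_diag_mul]
        have hterm : ∀ k : Fin n, f k * ((star Uc * σ * Uc) k k) = ((φ k * q k : ℝ) : ℂ) := by
          intro k
          rw [hfφ k, hq_entry k]
          push_cast
          ring
        rw [Finset.sum_congr rfl fun k _ => hterm k, ← Complex.ofReal_sum]
      have habs := htr_le σ hσ1
      rw [htr, Complex.norm_real, Real.norm_eq_abs] at habs
      calc ∑ k, φ k * q k ≤ |∑ k, φ k * q k| := le_abs_self _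
        _ ≤ 1 := habs
    have hpoint : ∀ k, g k * (∑ j, p k j * Real.log (s j))
        ≤ g k * Real.log (a k) + (φ k * q k - g k) := by
      intro k
      rcases eq_or_ne (g k) 0 with h | h
      · rw [h]
        have hpos : (0:ℝ) ≤ φ k * q k := mul_nonneg (hφ0 k) (hq0 k)
        simp only [zero_mul, sub_zero, zero_add]
        linarith
      · have hgpos : 0 < g k := (hg0 k).lt_of_ne (Ne.symm h)
        have hak : a k ≠ 0 := by
          intro h0
          exact h (by rw [hgdef k, h0, mul_zero])
        have hakpos : 0 < a k := (ha0 k).lt_of_ne (Ne.symm hak)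
        have hqk : 0 < q k := hqpos k h
        have hjen : ∑ j, p k j * Real.log (s j) ≤ Real.log (q k) := by
          rw [hqdef k]
          exact S19.jensen_log s (p k) hs0 (hp0 k)
            (fun j hsj => by rw [hpdef k j, hCzero k h j hsj]; simp) (hp1 k)
        have hlog : Real.log (q k) ≤ Real.log (a k) + (q k / a k - 1) := by
          have hd := Real.log_le_sub_one_of_pos (div_pos hqk hakpos)
          rw [Real.log_div (ne_of_gt hqk) hak] at hd
          linarith
        have hmul := mul_le_mul_of_nonneg_left (hjen.trans hlog) (le_of_lt hgpos)
        have hgq : g k * (q k / a k) = φ k * q k := by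
          rw [hgdef k]
          field_simp
        nlinarith [hmul, hgq]
    have hsumineq : ∑ k, g k * (∑ j, p k j * Real.log (s j)) ≤ ∑ k, g k * Real.log (a k) := by
      have h1 := Finset.sum_le_sum fun k (_ : k ∈ Finset.univ) => hpoint k
      rw [Finset.sum_add_distrib] at h1
      have h2 : ∑ k, (φ k * q k - g k) = (∑ k, φ k * q k) - 1 := by
        rw [Finset.sum_sub_distrib, hg1]
      rw [h2] at h1
      linarith [hφq]
    have hre1 : ((η * A) * matLog σ).trace.re = ∑ k, g k * (∑ j, p k j * Real.log (s j)) := by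
      rw [htrρ]
      have hterm : ∀ k : Fin n, ((g k : ℝ) : ℂ) * ((star Uc * matLog σ * Uc) k k)
          = ((g k * (∑ j, p k j * Real.log (s j)) : ℝ) : ℂ) := by
        intro k
        rw [hL_entry k]
        push_cast
        ring
      rw [Finset.sum_congr rfl fun k _ => hterm k, ← Complex.ofReal_sum, Complex.ofReal_re]
    have hre2 : ((η * A) * matLog A).trace.re = ∑ k, g k * Real.log (a k) := by
      rw [htrρ]
      have hdiagA : star Uc * (Uc * Matrix.diagonal (RCLike.ofReal ∘ Real.log ∘ a) * star Uc) * Uc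
          = Matrix.diagonal (RCLike.ofReal ∘ Real.log ∘ a) := by
        calc star Uc * (Uc * Matrix.diagonal (RCLike.ofReal ∘ Real.log ∘ a) * star Uc) * Uc
            = (star Uc * Uc) * (Matrix.diagonal (RCLike.ofReal ∘ Real.log ∘ a)
              * (star Uc * Uc)) := by simp only [mul_assoc]
          _ = _ := by rw [hU1, one_mul, mul_one]
      have hterm : ∀ k : Fin n, ((g k : ℝ) : ℂ) * ((star Uc * matLog A * Uc) k k)
          = ((g k * Real.log (a k) : ℝ) : ℂ) := by
        intro k
        rw [hLA, hdiagA, Matrix.diagonal_apply_eq]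
        show ((g k : ℝ) : ℂ) * ((Real.log (a k) : ℝ) : ℂ) = _
        push_cast
        ring
      rw [Finset.sum_congr rfl fun k _ => hterm k, ← Complex.ofReal_sum, Complex.ofReal_re]
    rw [hre1, hre2]
    exact hsumineq
  linarith
end Main
end
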